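/- Let γ be a C¹ convex planar curve parametrized by arc length which is simply covered by the ring segment R(M,R,d,θ₁,θ₂) with 0 < d < R, and let L_γ > 0 be its length. Then there exists θ₀ ∈ [θ₁,θ₂] such that the point x(θ₀) of gr γ, with normal angle φ₀ = φ(θ₀), satisfies sin|φ₀ − θ₀| ≤ 2dR/(L_γ(R−d)). -/

import Mathlib

open Set Real

/-- The Euclidean norm on `ℝ × ℝ`. -/
noncomputable def pnorm (v : ℝ × ℝ) : ℝ := Real.sqrt (v.1 ^ 2 + v.2 ^ 2)

/-- The open ray emanating from `M` in direction `(cos θ, sin θ)`. -/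
def rayFrom (M : ℝ × ℝ) (θ : ℝ) : Set (ℝ × ℝ) :=
  {p | ∃ r : ℝ, 0 < r ∧ p = M + r • (Real.cos θ, Real.sin θ)}

/-- The `(M,R,d,θ₁,θ₂)`-ring segment. -/
def ringSeg (M : ℝ × ℝ) (R d θ₁ θ₂ : ℝ) : Set (ℝ × ℝ) :=
  {p | ∃ r θ : ℝ, R - d ≤ r ∧ r ≤ R + d ∧ θ₁ ≤ θ ∧ θ ≤ θ₂ ∧
    p = M + r • (Real.cos θ, Real.sin θ)}

/-- The ring segment `R(M,R,d,θ₁,θ₂)` simply covers the set `G` (the graph of a curve):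
every ray with angle `θ ∈ [θ₁,θ₂]` meets `G` in exactly one point, that point lies in the
ring segment, and every point of `G` lies on such a ray. -/
def SimplyCovers (M : ℝ × ℝ) (R d θ₁ θ₂ : ℝ) (G : Set (ℝ × ℝ)) : Prop :=
  (∀ θ ∈ Set.Icc θ₁ θ₂, ∃! p : ℝ × ℝ, p ∈ rayFrom M θ ∩ G) ∧
  (∀ θ ∈ Set.Icc θ₁ θ₂, ∀ p ∈ rayFrom M θ ∩ G, p ∈ ringSeg M R d θ₁ θ₂) ∧
  (∀ p ∈ G, ∃ θ ∈ Set.Icc θ₁ θ₂, p ∈ rayFrom M θ)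

/-- `G` is the graph of a convex curve: it is contained in the boundary of a nonempty
compact convex subset of `ℝ²`. -/
def IsConvexCurveGraph (G : Set (ℝ × ℝ)) : Prop :=
  ∃ K : Set (ℝ × ℝ), K.Nonempty ∧ IsCompact K ∧ Convex ℝ K ∧ G ⊆ frontier K

set_option maxHeartbeats 2000000 in
/-- For a C¹ convex arc-length curve of length `L_γ = b − a > 0`,
simply covered by the ring segment `R(M,R,d,θ₁,θ₂)` with `0 < d < R`, there exists
`θ₀ ∈ [θ₁,θ₂]` such that the covered point `x(θ₀) = γ(s)` with normal angle `φ₀ = φ(s)`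
satisfies `sin |φ₀ − θ₀| ≤ 2dR/(L_γ(R−d))`. -/
theorem exists_point_with_small_normal_radial_angle
    (a b R d θ₁ θ₂ : ℝ) (M : ℝ × ℝ) (γ : ℝ → ℝ × ℝ) (φ : ℝ → ℝ)
    (hab : a < b) (hd : 0 < d) (hdR : d < R) (hθ : θ₁ < θ₂)
    (hC1 : ContDiffOn ℝ 1 γ (Set.Icc a b))
    (htang : ∀ s ∈ Set.Icc a b, deriv γ s = (Real.sin (φ s), -Real.cos (φ s)))
    (hconv : IsConvexCurveGraph (γ '' Set.Icc a b))
    (hcover : SimplyCovers M R d θ₁ θ₂ (γ '' Set.Icc a b)) :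
    ∃ θ₀ ∈ Set.Icc θ₁ θ₂, ∃ s ∈ Set.Icc a b, γ s ∈ rayFrom M θ₀ ∧
      Real.sin |φ s - θ₀| ≤ 2 * d * R / ((b - a) * (R - d)) := by
  obtain ⟨huniq, hring, hray⟩ := hcover
  set f : ℝ → ℝ := fun s => ((γ s).1 - M.1) ^ 2 + ((γ s).2 - M.2) ^ 2 with hf
  -- bound on f over [a,b]
  have hfbound : ∀ t ∈ Set.Icc a b, (R - d) ^ 2 ≤ f t ∧ f t ≤ (R + d) ^ 2 := by
    intro t ht
    have hmem : γ t ∈ γ '' Set.Icc a b := ⟨t, ht, rfl⟩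
    obtain ⟨θ, hθmem, hray'⟩ := hray _ hmem
    obtain ⟨r, θ', hr1, hr2, _, _, hp⟩ := hring θ hθmem _ ⟨hray', hmem⟩
    have h1 : (γ t).1 - M.1 = r * Real.cos θ' := by rw [hp]; simp
    have h2 : (γ t).2 - M.2 = r * Real.sin θ' := by rw [hp]; simp
    have hpy : Real.sin θ' ^ 2 + Real.cos θ' ^ 2 = 1 := Real.sin_sq_add_cos_sq θ'
    have hfval : f t = r ^ 2 := by rw [hf]; simp only [h1, h2]; nlinarith
    have hr0 : 0 < r := by linarith
    constructor
    · rw [hfval]; nlinarith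
    · rw [hfval]; nlinarith
  -- differentiability of γ at interior points
  have hdiffγ : ∀ c ∈ Set.Ioo a b, HasDerivAt γ (deriv γ c) c := by
    intro c hc
    have h1 : DifferentiableOn ℝ γ (Set.Icc a b) := hC1.differentiableOn one_ne_zero
    have h2 : Set.Icc a b ∈ nhds c := Icc_mem_nhds hc.1 hc.2
    exact ((h1 c (Set.Ioo_subset_Icc_self hc)).differentiableAt h2).hasDerivAt
  -- derivative of f
  have hfderiv : ∀ c ∈ Set.Ioo a b, HasDerivAt f
      (2 * ((γ c).1 - M.1) * (deriv γ c).1 + 2 * ((γ c).2 - M.2) * (deriv γ c).2) c := by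
    intro c hc
    have hγ := hdiffγ c hc
    have h1 : HasDerivAt (fun s => (γ s).1) (deriv γ c).1 c := hγ.fst
    have h2 : HasDerivAt (fun s => (γ s).2) (deriv γ c).2 c := hγ.snd
    have h1' := ((h1.sub_const M.1).pow 2)
    have h2' := ((h2.sub_const M.2).pow 2)
    have := h1'.add h2'
    exact this.congr_deriv (by ring)
  -- continuity of f on [a,b]
  have hγc := hC1.continuousOn
  have hfc : ContinuousOn f (Set.Icc a b) :=
    (((continuous_fst.comp_continuousOn hγc).sub continuousOn_const).pow 2).add
      (((continuous_snd.comp_continuousOn hγc).sub continuousOn_const).pow 2)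
  have hfd : DifferentiableOn ℝ f (Set.Ioo a b) := fun c hc =>
    ((hfderiv c hc).differentiableAt).differentiableWithinAt
  obtain ⟨c, hc, hslope⟩ := exists_deriv_eq_slope f hab hfc hfd
  have hcIcc : c ∈ Set.Icc a b := Set.Ioo_subset_Icc_self hc
  -- the ray through γ c
  obtain ⟨θ₀, hθ₀mem, hrayc⟩ := hray (γ c) ⟨c, hcIcc, rfl⟩
  obtain ⟨r, hr0, hp⟩ := hrayc
  refine ⟨θ₀, hθ₀mem, c, hcIcc, ⟨r, hr0, hp⟩, ?_⟩
  -- compute the derivative value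
  have h1 : (γ c).1 - M.1 = r * Real.cos θ₀ := by rw [hp]; simp
  have h2 : (γ c).2 - M.2 = r * Real.sin θ₀ := by rw [hp]; simp
  have htc := htang c hcIcc
  have hd1 : (deriv γ c).1 = Real.sin (φ c) := by rw [htc]
  have hd2 : (deriv γ c).2 = -Real.cos (φ c) := by rw [htc]
  have hDval : deriv f c = 2 * r * Real.sin (φ c - θ₀) := by
    rw [(hfderiv c hc).deriv, h1, h2, hd1, hd2, Real.sin_sub]
    ring
  -- r ≥ R - d
  have hfc2 : f c = r ^ 2 := by
    have hpy : Real.sin θ₀ ^ 2 + Real.cos θ₀ ^ 2 = 1 := Real.sin_sq_add_cos_sq θ₀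
    rw [hf]; simp only [h1, h2]; nlinarith
  have hrRd : R - d ≤ r := by
    have := (hfbound c hcIcc).1
    rw [hfc2] at this
    nlinarith
  -- bound |f b - f a| ≤ 4 R d
  have hba : (0:ℝ) < b - a := by linarith
  have hfa := hfbound a (Set.left_mem_Icc.2 hab.le)
  have hfb := hfbound b (Set.right_mem_Icc.2 hab.le)
  have hkey : 2 * r * |Real.sin (φ c - θ₀)| * (b - a) ≤ 4 * R * d := by
    have habs : |2 * r * Real.sin (φ c - θ₀)| = |f b - f a| / (b - a) := by
      rw [← hDval, hslope, abs_div, abs_of_pos hba]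
    have h4 : |f b - f a| ≤ 4 * R * d := by
      rw [abs_le]; constructor <;> nlinarith [hfa.1, hfa.2, hfb.1, hfb.2]
    have h5 : |2 * r * Real.sin (φ c - θ₀)| = 2 * r * |Real.sin (φ c - θ₀)| := by
      rw [abs_mul, abs_of_nonneg (by linarith : (0:ℝ) ≤ 2 * r)]
    rw [h5] at habs
    have h6 : 2 * r * |Real.sin (φ c - θ₀)| * (b - a) = |f b - f a| := by
      rw [habs]; field_simp
    linarith
  -- conclude
  have hsinabs : Real.sin |φ c - θ₀| ≤ |Real.sin (φ c - θ₀)| := by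
    rcases abs_cases (φ c - θ₀) with ⟨h, _⟩ | ⟨h, _⟩
    · rw [h]; exact le_abs_self _
    · rw [h, Real.sin_neg]; exact neg_le_abs _
  have hden : (0:ℝ) < (b - a) * (R - d) := mul_pos hba (by linarith)
  rw [le_div_iff₀ hden]
  have hS : 0 ≤ |Real.sin (φ c - θ₀)| := abs_nonneg _
  nlinarith [mul_le_mul_of_nonneg_right hsinabs (le_of_lt hden)]
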